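/- Let A be a commutative ring and let U ⊆ Spec A be a quasi-compact open subset such that the restriction map A = Γ(Spec A, O_{Spec A}) → Γ(U, O_{Spec A}) is bijective. Then for every flat A-module M, the restriction map M = Γ(Spec A, M̃) → Γ(U, M̃) is bijective, where M̃ denotes the quasi-coherent sheaf of modules on Spec A associated with M (the tilde construction). -/

import Mathlib

/-!
STATEMENT 9: Let `A` be a commutative ring and `U ⊆ Spec A` a quasi-compact open subset such
that the restriction map `A = Γ(Spec A, O) → Γ(U, O)` is bijective.  Then for every flat
`A`-module `M`, the restriction map `M = Γ(Spec A, M̃) → Γ(U, M̃)` is bijective.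
-/

open AlgebraicGeometry TopologicalSpace

lemma aux_pow_smul {A : Type} [CommRing A] {M : Type} [AddCommGroup M] [Module A M]
    (f : A) (m : M)
    (h : ∀ p : PrimeSpectrum A, f ∉ p.asIdeal → ∃ u, u ∉ p.asIdeal ∧ u • m = 0) :
    ∃ N : ℕ, f ^ N • m = 0 := by
  have hf : f ∈ Ideal.radical (LinearMap.ker (LinearMap.toSpanSingleton A M m)) := by
    rw [Ideal.radical_eq_sInf]
    refine Submodule.mem_sInf.2 ?_
    rintro J ⟨hIJ, hJ⟩
    by_contra hfJ
    obtain ⟨u, huJ, hum⟩ := h ⟨J, hJ⟩ hfJ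
    exact huJ (hIJ (by simpa [LinearMap.mem_ker] using hum))
  obtain ⟨n, hn⟩ := hf
  exact ⟨n, by simpa [LinearMap.mem_ker] using hn⟩
lemma aux_flat_matrix {A : Type} [CommRing A] {M : Type} [AddCommGroup M] [Module A M]
    [Module.Flat A M] {ι κ : Type} [Fintype ι] [Fintype κ] [DecidableEq ι] [DecidableEq κ]
    (B : κ → ι → A) (v : ι → M) (hv : ∀ k, ∑ i, B k i • v i = 0) :
    ∃ (τ : Type) (_ : Fintype τ) (c : τ → ι → A) (μ : τ → M),
      (∀ t k, ∑ i, B k i * c t i = 0) ∧ ∀ i, v i = ∑ t, c t i • μ t := by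
  classical
  let x : (ι → A) →ₗ[A] M := Fintype.linearCombination A v
  let f : (κ → A) →ₗ[A] (ι → A) := (Matrix.of fun i k => B k i).mulVecLin
  have hxf : x ∘ₗ f = 0 := by
    ext k
    simp only [LinearMap.comp_apply, LinearMap.zero_apply, x, f,
      Fintype.linearCombination_apply, Matrix.mulVecLin_apply, LinearMap.coe_single]
    rw [← hv k]
    congr 1
    ext i
    simp [Matrix.mulVec, dotProduct, Pi.single_apply, mul_comm]
  obtain ⟨k', a, y, hxy, haf⟩ :=
    Module.Flat.exists_factorization_of_comp_eq_zero_of_free hxf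
  refine ⟨Fin k', inferInstance, fun t i => a (Pi.single i 1) t, fun t => y (Finsupp.single t 1), ?_, ?_⟩
  · intro t k
    have h1 : a (f (Pi.single k 1)) = 0 := by
      rw [← LinearMap.comp_apply, haf]; rfl
    have h2 : f (Pi.single k 1) = ∑ i, B k i • (Pi.single i 1 : ι → A) := by
      ext j
      simp [f, Matrix.mulVec, dotProduct, Pi.single_apply]
    rw [h2] at h1
    calc ∑ i, B k i * a (Pi.single i 1) t
        = (∑ i, B k i • a (Pi.single i 1)) t := by
          simp [Finsupp.finset_sum_apply, smul_eq_mul]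
      _ = (a (∑ i, B k i • (Pi.single i 1 : ι → A))) t := by rw [map_sum]; simp
      _ = 0 := by rw [h1]; rfl
  · intro i
    have h0 : v i = x (Pi.single i 1) := by
      simp [x, Fintype.linearCombination_apply, Pi.single_apply]
    rw [h0, hxy]
    have hexp : (a (Pi.single i 1) : Fin k' →₀ A) = ∑ t, (a (Pi.single i 1) t) • Finsupp.single t 1 := by
      ext t'
      simp [Finsupp.single_apply, Finsupp.finset_sum_apply, mul_comm]
    show y (a (Pi.single i 1)) = _
    rw [hexp, map_sum]
    exact Finset.sum_congr rfl fun t _ => map_smul y _ _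
lemma aux_glue {A : Type} [CommRing A]
    (U : Opens (PrimeSpectrum.Top A))
    (hA : Function.Bijective (StructureSheaf.toOpenₗ A A U))
    {ι : Type} [Fintype ι] (h : ι → A) (c : ι → A)
    (hsub : ∀ i, PrimeSpectrum.basicOpen (h i) ≤ U)
    (hcover : (U : Set (PrimeSpectrum.Top A)) ⊆
      ⋃ i, (PrimeSpectrum.basicOpen (h i) : Set (PrimeSpectrum A)))
    (hrel : ∀ i j, h j * c i = h i * c j) :
    ∃ a : A, ∀ i, ∃ N : ℕ, (h i) ^ N * (h i * a - c i) = 0 := by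
  classical
  have hinst : ∀ p : PrimeSpectrum.Top A, p.asIdeal.IsPrime := fun p => p.2
  have hex : ∀ p : U, ∃ i, h i ∈ p.1.asIdeal.primeCompl := by
    intro p
    obtain ⟨i, hp⟩ := Set.mem_iUnion.1 (hcover p.2)
    exact ⟨i, hp⟩
  choose idx hidx using hex
  let s : ∀ p : U, StructureSheaf.Localizations A p.1 := fun p =>
    LocalizedModule.mk (c (idx p)) ⟨h (idx p), hidx p⟩
  have hs : ∀ (p : U) (i : ι) (hi : h i ∈ p.1.asIdeal.primeCompl),
      s p = LocalizedModule.mk (c i) ⟨h i, hi⟩ := by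
    intro p i hi
    show LocalizedModule.mk _ _ = _
    rw [LocalizedModule.mk_eq]
    refine ⟨1, ?_⟩
    simp only [one_smul, Submonoid.smul_def, smul_eq_mul]
    exact hrel (idx p) i
  obtain ⟨a, ha⟩ := hA.2 ⟨s, fun p => ⟨U ⊓ PrimeSpectrum.basicOpen (h (idx p)), ⟨p.2, hidx p⟩,
    Opens.infLELeft _ _, c (idx p), h (idx p), fun q => ⟨q.2.2, hs ⟨q.1, q.2.1⟩ (idx p) q.2.2⟩⟩⟩
  have haval : ∀ (p : U), (LocalizedModule.mk a 1 : StructureSheaf.Localizations A p.1) = s p :=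
    fun p => congrFun (congrArg Subtype.val ha) p
  refine ⟨a, fun i => ?_⟩
  have := aux_pow_smul (M := A) (h i) (h i * a - c i) ?_
  · simpa [smul_eq_mul] using this
  · intro p hp
    have hpU : p ∈ U := hsub i hp
    have h1 : (LocalizedModule.mk a 1 : LocalizedModule p.asIdeal.primeCompl A)
        = LocalizedModule.mk (c i) ⟨h i, hp⟩ := (haval ⟨p, hpU⟩).trans (hs ⟨p, hpU⟩ i hp)
    rw [LocalizedModule.mk_eq] at h1
    obtain ⟨u, hu⟩ := h1
    refine ⟨u, u.2, ?_⟩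
    have : (u : A) * (h i * a) = u * c i := by simpa [Submonoid.smul_def] using hu
    rw [smul_eq_mul]
    linear_combination this

theorem statement9 (A : Type) [CommRing A]
    (U : Opens (PrimeSpectrum.Top A)) (hU : IsCompact (U : Set (PrimeSpectrum.Top A)))
    (hA : Function.Bijective (StructureSheaf.toOpen A U))
    (M : Type) [AddCommGroup M] [Module A M] [Module.Flat A M] :
    Function.Bijective (ModuleCat.Tilde.toOpen (R := CommRingCat.of A) (ModuleCat.of A M) U) := by
  classical
  have hinst : ∀ p : PrimeSpectrum.Top A, p.asIdeal.IsPrime := fun p => p.2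
  replace hA : Function.Bijective (StructureSheaf.toOpenₗ A A U) := by
    exact hA
  show Function.Bijective (StructureSheaf.toOpenₗ A M U)
  constructor
  · -- injectivity
    have hker : ∀ m : M, StructureSheaf.toOpenₗ A M U m = 0 → m = 0 := by
      intro m hm
      have hloc : ∀ p : U, ∃ u, u ∈ p.1.asIdeal.primeCompl ∧ u • m = 0 := by
        intro p
        have h0 : (LocalizedModule.mk m 1 : LocalizedModule p.1.asIdeal.primeCompl M) = 0 :=
          congrFun (congrArg Subtype.val hm) p
        rw [← LocalizedModule.zero_mk (1 : p.1.asIdeal.primeCompl), LocalizedModule.mk_eq] at h0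
        obtain ⟨u, hu⟩ := h0
        exact ⟨u, u.2, by simpa [Submonoid.smul_def] using hu⟩
      choose u hu hum using hloc
      have hcov : (U : Set (PrimeSpectrum.Top A)) ⊆
          ⋃ p : U, (PrimeSpectrum.basicOpen (u p) : Set (PrimeSpectrum A)) := by
        intro q hq
        exact Set.mem_iUnion.2 ⟨⟨q, hq⟩, hu ⟨q, hq⟩⟩
      obtain ⟨t, ht⟩ := hU.elim_finite_subcover
        (fun p : U => (PrimeSpectrum.basicOpen (u p) : Set (PrimeSpectrum A)))
        (fun p => (PrimeSpectrum.basicOpen (u p)).2) hcov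
      obtain ⟨τ, hτ, c, μ, hc1, hc2⟩ := aux_flat_matrix (ι := Unit) (κ := t)
        (fun k _ => u k) (fun _ => m) (fun k => by simpa using hum k)
      have hc0 : ∀ t', c t' () = 0 := by
        intro t'
        apply hA.1
        refine Subtype.eq (funext fun p => ?_)
        obtain ⟨q, hq⟩ := Set.mem_iUnion.1 (ht p.2)
        obtain ⟨hkt, hpk⟩ := Set.mem_iUnion.1 hq
        show LocalizedModule.mk (c t' ()) 1 = LocalizedModule.mk 0 1
        rw [LocalizedModule.mk_eq]
        refine ⟨⟨u q, hpk⟩, ?_⟩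
        simpa [Submonoid.smul_def] using hc1 t' ⟨q, hkt⟩
      have := hc2 ()
      simp only [hc0, zero_smul, Finset.sum_const_zero] at this
      exact this
    intro m m' hmm
    have : ((m : ModuleCat.of A M) - m') = 0 := by
      apply hker
      rw [map_sub, hmm, sub_self]
    exact sub_eq_zero.1 this
  · intro s
    -- Step 1: local description of s by fractions with matched denominators
    have step1 : ∀ p : U, ∃ (h : A) (w : M), p.1 ∈ PrimeSpectrum.basicOpen h ∧
        PrimeSpectrum.basicOpen h ≤ U ∧
        ∀ (q : PrimeSpectrum A) (hq : q ∈ PrimeSpectrum.basicOpen h) (hqU : q ∈ U),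
          s.1 ⟨q, hqU⟩ = LocalizedModule.mk w ⟨h, hq⟩ := by
      intro p
      obtain ⟨g, hxg, iU, f, hfg⟩ := StructureSheaf.exists_const U s p.1 p.2
      refine ⟨g, f, hxg, iU, ?_⟩
      intro q hq hqU
      exact (congrFun (congrArg Subtype.val hfg) ⟨q, hq⟩).symm
    choose H0 W0 hmem hsub hval using step1
    -- Step 2: finite subcover
    have hcov : (U : Set (PrimeSpectrum.Top A)) ⊆
        ⋃ p : U, (PrimeSpectrum.basicOpen (H0 p) : Set (PrimeSpectrum A)) :=
      fun q hq => Set.mem_iUnion.2 ⟨⟨q, hq⟩, hmem ⟨q, hq⟩⟩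
    obtain ⟨t, ht⟩ := hU.elim_finite_subcover
      (fun p : U => (PrimeSpectrum.basicOpen (H0 p) : Set (PrimeSpectrum A)))
      (fun p => (PrimeSpectrum.basicOpen (H0 p)).2) hcov
    -- Step 3: uniform annihilation exponent on overlaps
    have step3 : ∀ i j : t, ∃ N,
        (H0 i.1 * H0 j.1) ^ N • ((H0 j.1) • W0 i.1 - (H0 i.1) • W0 j.1) = 0 := by
      intro i j
      apply aux_pow_smul
      intro q hq
      have hqi : q ∈ PrimeSpectrum.basicOpen (H0 i.1) := by
        rw [PrimeSpectrum.mem_basicOpen]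
        exact fun hc => hq (Ideal.mul_mem_right _ _ hc)
      have hqj : q ∈ PrimeSpectrum.basicOpen (H0 j.1) := by
        rw [PrimeSpectrum.mem_basicOpen]
        exact fun hc => hq (Ideal.mul_mem_left _ _ hc)
      have hqU : q ∈ U := hsub i.1 hqi
      have e2 := (hval i.1 q hqi hqU).symm.trans (hval j.1 q hqj hqU)
      rw [LocalizedModule.mk_eq] at e2
      obtain ⟨u, hu⟩ := e2
      refine ⟨u, u.2, ?_⟩
      rw [smul_sub, sub_eq_zero]
      simpa [Submonoid.smul_def] using hu
    choose Nf hNf using step3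
    set N := Finset.univ.sup (fun ij : t × t => Nf ij.1 ij.2) with hNdef
    have step3' : ∀ i j : t,
        (H0 i.1 * H0 j.1) ^ N • ((H0 j.1) • W0 i.1 - (H0 i.1) • W0 j.1) = 0 := by
      intro i j
      have hle : Nf i j ≤ N :=
        Finset.le_sup (f := fun ij : t × t => Nf ij.1 ij.2) (Finset.mem_univ (i, j))
      rw [← Nat.sub_add_cancel hle, pow_add, mul_smul, hNf i j, smul_zero]
    -- Step 4: renormalize
    set H : t → A := fun i => (H0 i.1) ^ (N + 1) with hHdef
    set W : t → M := fun i => (H0 i.1) ^ N • W0 i.1 with hWdef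
    have hrelHW : ∀ i j : t, H j • W i = H i • W j := by
      intro i j
      have h3 := step3' i j
      rw [smul_sub, sub_eq_zero] at h3
      calc H j • W i = ((H0 i.1 * H0 j.1) ^ N * H0 j.1) • W0 i.1 := by
            rw [hHdef, hWdef, smul_smul]; congr 1; ring
        _ = (H0 i.1 * H0 j.1) ^ N • (H0 j.1 • W0 i.1) := by rw [mul_smul]
        _ = (H0 i.1 * H0 j.1) ^ N • (H0 i.1 • W0 j.1) := h3
        _ = H i • W j := by
            rw [hHdef, hWdef, ← mul_smul, smul_smul]; congr 1; ring
    have hDH : ∀ i : t, PrimeSpectrum.basicOpen (H i) = PrimeSpectrum.basicOpen (H0 i.1) :=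
      fun i => PrimeSpectrum.basicOpen_pow _ _ (Nat.succ_pos N)
    have hsubH : ∀ i : t, PrimeSpectrum.basicOpen (H i) ≤ U := fun i => (hDH i) ▸ hsub i.1
    have hcovH : (U : Set (PrimeSpectrum.Top A)) ⊆
        ⋃ i : t, (PrimeSpectrum.basicOpen (H i) : Set (PrimeSpectrum A)) := by
      intro q hq
      obtain ⟨p, hp⟩ := Set.mem_iUnion.1 (ht hq)
      obtain ⟨hpt, hqp⟩ := Set.mem_iUnion.1 hp
      refine Set.mem_iUnion.2 ⟨⟨p, hpt⟩, ?_⟩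
      rw [hDH ⟨p, hpt⟩]
      exact hqp
    have hvalH : ∀ (i : t) (q : PrimeSpectrum A) (hq : q ∈ PrimeSpectrum.basicOpen (H i))
        (hqU : q ∈ U), s.1 ⟨q, hqU⟩ =
          LocalizedModule.mk (W i) ⟨H i, (PrimeSpectrum.mem_basicOpen _ _).1 hq⟩ := by
      intro i q hq hqU
      have hq0 : q ∈ PrimeSpectrum.basicOpen (H0 i.1) := (hDH i) ▸ hq
      rw [hval i.1 q hq0 hqU, LocalizedModule.mk_eq]
      refine ⟨1, ?_⟩
      rw [one_smul, one_smul, Submonoid.smul_def, Submonoid.smul_def]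
      show H i • W0 i.1 = H0 i.1 • W i
      rw [show H i = H0 i.1 ^ (N+1) from rfl, show W i = H0 i.1 ^ N • W0 i.1 from rfl,
        smul_smul]
      congr 1; ring
    -- Step 5: flatness
    have hvW : ∀ k : t × t, ∑ i : t,
        ((if i = k.1 then H k.2 else 0) - (if i = k.2 then H k.1 else 0)) • W i = 0 := by
      intro k
      simp only [sub_smul, ite_smul, zero_smul, Finset.sum_sub_distrib, Finset.sum_ite_eq',
        Finset.mem_univ, if_true]
      rw [hrelHW k.1 k.2, sub_self]
    obtain ⟨τ, hτ, cc, μ, hc1, hc2⟩ := aux_flat_matrix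
      (fun (k : t × t) (i : t) =>
        (if i = k.1 then H k.2 else 0) - (if i = k.2 then H k.1 else 0)) W hvW
    have hrelc : ∀ (t' : τ) (i j : t), H j * cc t' i = H i * cc t' j := by
      intro t' i j
      have h1 := hc1 t' (i, j)
      simp only [sub_mul, ite_mul, zero_mul, Finset.sum_sub_distrib, Finset.sum_ite_eq',
        Finset.mem_univ, if_true] at h1
      exact sub_eq_zero.1 h1
    -- Step 6: glue the coefficient vectors
    have hglue : ∀ t' : τ, ∃ a : A, ∀ i : t, ∃ N', (H i) ^ N' * (H i * a - cc t' i) = 0 :=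
      fun t' => aux_glue U hA H (cc t') hsubH hcovH (fun i j => hrelc t' i j)
    choose a ha using hglue
    choose Na hNa using ha
    -- Step 7: the global element
    refine ⟨∑ t', a t' • μ t', ?_⟩
    set m : M := ∑ t', a t' • μ t' with hmdef
    have step7 : ∀ i : t, ∃ K, (H i) ^ K • (H i • m - W i) = 0 := by
      intro i
      refine ⟨Finset.univ.sup (fun t' : τ => Na t' i), ?_⟩
      set K := Finset.univ.sup (fun t' : τ => Na t' i) with hKdef
      have hdiff : H i • m - W i = ∑ t', (H i * a t' - cc t' i) • μ t' := by
        rw [hmdef, hc2 i, Finset.smul_sum, ← Finset.sum_sub_distrib]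
        refine Finset.sum_congr rfl fun t' _ => ?_
        rw [smul_smul, sub_smul]
      rw [hdiff, Finset.smul_sum]
      refine Finset.sum_eq_zero fun t' _ => ?_
      have hle : Na t' i ≤ K := Finset.le_sup (f := fun t' : τ => Na t' i) (Finset.mem_univ t')
      have hz : (H i) ^ K * (H i * a t' - cc t' i) = 0 := by
        rw [← Nat.sub_add_cancel hle, pow_add, mul_assoc, hNa t' i, mul_zero]
      rw [smul_smul, hz, zero_smul]
    choose K hK using step7
    -- Step 8: conclude
    refine Subtype.eq (funext fun q => ?_)
    obtain ⟨q, hqU⟩ := q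
    obtain ⟨i, hqi⟩ := Set.mem_iUnion.1 (hcovH hqU)
    show LocalizedModule.mkLinearMap _ _ m = s.1 ⟨q, hqU⟩
    rw [LocalizedModule.mkLinearMap_apply]
    have hq' : q ∈ PrimeSpectrum.basicOpen (H i) := hqi
    rw [hvalH i q hq' hqU, LocalizedModule.mk_eq]
    refine ⟨⟨(H i) ^ (K i), Submonoid.pow_mem _ ((PrimeSpectrum.mem_basicOpen _ _).1 hq') _⟩, ?_⟩
    rw [Submonoid.smul_def, Submonoid.smul_def, Submonoid.smul_def, Submonoid.smul_def]
    show (H i) ^ (K i) • ((H i) • m) = (H i) ^ (K i) • ((1 : A) • W i)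
    rw [one_smul]
    have := hK i
    rw [smul_sub, sub_eq_zero] at this
    exact this
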